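/- With notation as in the previous statement, the k-th term of the Volterra expansion is bounded in norm by (M ‖B‖)^k e^{‖A‖ t} t^k / k! · ‖x₀‖, so the Volterra series converges for all t ≥ 0. -/

import Mathlib

open MeasureTheory intervalIntegral

attribute [local instance] Matrix.linftyOpNormedRing Matrix.linftyOpNormedAlgebra

/-- The `k`-th term of the Volterra series (iterated integral over the ordered simplex
`{0 ≤ τ_k ≤ ⋯ ≤ τ₁ ≤ t}` of `u τ₁ ⋯ u τ_k • e^{(t-τ₁)A} B e^{(τ₁-τ₂)A} B ⋯ B e^{τ_k A} x₀`). -/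
noncomputable def volterraTerm {n : ℕ} (A B : Matrix (Fin n) (Fin n) ℂ) (u : ℝ → ℂ)
    (x₀ : Fin n → ℂ) : ℕ → ℝ → Fin n → ℂ
  | 0, t => (NormedSpace.exp (t • A)).mulVec x₀
  | k + 1, t => ∫ τ in (0:ℝ)..t,
      u τ • (NormedSpace.exp ((t - τ) • A)).mulVec (B.mulVec (volterraTerm A B u x₀ k τ))

theorem norm_matrix_pow_le {n : ℕ} (X : Matrix (Fin n) (Fin n) ℂ) (k : ℕ) :
    ‖X ^ k‖ ≤ ‖X‖ ^ k := by
  rcases Nat.eq_zero_or_pos k with hk | hk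
  · subst hk
    simp only [pow_zero]
    rcases Nat.eq_zero_or_pos n with h | h
    · have : (1 : Matrix (Fin n) (Fin n) ℂ) = 0 := by subst h; exact Subsingleton.elim _ _
      rw [this, norm_zero]; norm_num
    · haveI : Nonempty (Fin n) := Fin.pos_iff_nonempty.mp h
      rw [norm_one]
  · exact norm_pow_le' X hk

/-- Norm bound on the exponential: `‖exp ℂ X‖ ≤ exp ‖X‖`. -/
theorem norm_exp_le_exp_norm' {n : ℕ} (X : Matrix (Fin n) (Fin n) ℂ) :
    ‖NormedSpace.exp X‖ ≤ Real.exp ‖X‖ := by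
  rw [NormedSpace.exp_eq_tsum (𝕂 := ℂ), Real.exp_eq_exp_ℝ, NormedSpace.exp_eq_tsum_div]
  calc ‖∑' k : ℕ, ((k.factorial : ℂ)⁻¹ • X ^ k)‖
      ≤ ∑' k : ℕ, ‖(k.factorial : ℂ)⁻¹ • X ^ k‖ :=
        norm_tsum_le_tsum_norm (NormedSpace.norm_expSeries_summable' X)
    _ ≤ ∑' k : ℕ, ‖X‖ ^ k / (k.factorial : ℝ) := by
        refine Summable.tsum_le_tsum (fun k => ?_) (NormedSpace.norm_expSeries_summable' X)
          (Real.summable_pow_div_factorial ‖X‖)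
        rw [norm_smul, norm_inv, Complex.norm_natCast, div_eq_inv_mul]
        exact mul_le_mul_of_nonneg_left (norm_matrix_pow_le X k) (by positivity)

/-- **Bound on the `k`-th Volterra term.** If `|u| ≤ M` on `[0, t]`, the `k`-th term of the
Volterra expansion is bounded in norm by `(M ‖B‖)^k e^{‖A‖ t} t^k / k! ⬝ ‖x₀‖`, hence the
Volterra series converges (the norms are summable) for every `t ≥ 0`. -/
theorem stmt_3 {n : ℕ} (A B : Matrix (Fin n) (Fin n) ℂ) (u : ℝ → ℂ) (hu : Continuous u)
    (x₀ : Fin n → ℂ) (M : ℝ) (t : ℝ) (ht : 0 ≤ t)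
    (hM : ∀ τ ∈ Set.Icc (0:ℝ) t, ‖u τ‖ ≤ M) :
    (∀ k : ℕ, ‖volterraTerm A B u x₀ k t‖ ≤
        (M * ‖B‖) ^ k * Real.exp (‖A‖ * t) * t ^ k / (Nat.factorial k) * ‖x₀‖) ∧
      Summable fun k : ℕ => ‖volterraTerm A B u x₀ k t‖ := by
  have hM0 : 0 ≤ M := le_trans (norm_nonneg _) (hM 0 ⟨le_refl 0, ht⟩)
  have key : ∀ k : ℕ, ∀ s ∈ Set.Icc (0:ℝ) t, ‖volterraTerm A B u x₀ k s‖ ≤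
      (M * ‖B‖) ^ k * Real.exp (‖A‖ * s) * s ^ k / (Nat.factorial k) * ‖x₀‖ := by
    intro k
    induction k with
    | zero =>
      intro s hs
      simp only [volterraTerm, pow_zero, one_mul, mul_one, Nat.factorial_zero, Nat.cast_one,
        div_one]
      calc ‖(NormedSpace.exp (s • A)).mulVec x₀‖
          ≤ ‖NormedSpace.exp (s • A)‖ * ‖x₀‖ := Matrix.linfty_opNorm_mulVec _ _
        _ ≤ Real.exp ‖s • A‖ * ‖x₀‖ :=
            mul_le_mul_of_nonneg_right (norm_exp_le_exp_norm' _) (norm_nonneg _)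
        _ = Real.exp (‖A‖ * s) * ‖x₀‖ := by
            rw [norm_smul, Real.norm_eq_abs, abs_of_nonneg hs.1, mul_comm s ‖A‖]
    | succ k ih =>
      intro s hs
      have hs0 : 0 ≤ s := hs.1
      set C : ℝ := (M * ‖B‖) ^ (k + 1) * Real.exp (‖A‖ * s) * ‖x₀‖ / (Nat.factorial k) with hC
      have hCpos : 0 ≤ C := by positivity
      have hbound : ∀ τ ∈ Set.uIoc (0:ℝ) s,
          ‖u τ • (NormedSpace.exp ((s - τ) • A)).mulVec
              (B.mulVec (volterraTerm A B u x₀ k τ))‖ ≤ C * τ ^ k := by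
        intro τ hτ
        rw [Set.uIoc_of_le hs0] at hτ
        have hτ0 : 0 ≤ τ := le_of_lt hτ.1
        have hτt : τ ≤ t := le_trans hτ.2 hs.2
        have h1 : ‖u τ‖ ≤ M := hM τ ⟨hτ0, hτt⟩
        have h2 : ‖(NormedSpace.exp ((s - τ) • A)).mulVec
            (B.mulVec (volterraTerm A B u x₀ k τ))‖ ≤
            Real.exp (‖A‖ * (s - τ)) * (‖B‖ * ‖volterraTerm A B u x₀ k τ‖) := by
          calc ‖(NormedSpace.exp ((s - τ) • A)).mulVec
                (B.mulVec (volterraTerm A B u x₀ k τ))‖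
              ≤ ‖NormedSpace.exp ((s - τ) • A)‖ * ‖B.mulVec (volterraTerm A B u x₀ k τ)‖ :=
                Matrix.linfty_opNorm_mulVec _ _
            _ ≤ Real.exp (‖A‖ * (s - τ)) * (‖B‖ * ‖volterraTerm A B u x₀ k τ‖) := by
                apply mul_le_mul
                · calc ‖NormedSpace.exp ((s - τ) • A)‖ ≤ Real.exp ‖(s - τ) • A‖ :=
                        norm_exp_le_exp_norm' _
                    _ = Real.exp (‖A‖ * (s - τ)) := by
                        rw [norm_smul, Real.norm_eq_abs, abs_of_nonneg (by linarith [hτ.2]),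
                          mul_comm (s - τ) ‖A‖]
                · exact Matrix.linfty_opNorm_mulVec _ _
                · exact norm_nonneg _
                · positivity
        have h3 := ih τ ⟨hτ0, hτt⟩
        have he : Real.exp (‖A‖ * (s - τ)) * Real.exp (‖A‖ * τ) = Real.exp (‖A‖ * s) := by
          rw [← Real.exp_add]; ring_nf
        calc ‖u τ • (NormedSpace.exp ((s - τ) • A)).mulVec
              (B.mulVec (volterraTerm A B u x₀ k τ))‖
            = ‖u τ‖ * ‖(NormedSpace.exp ((s - τ) • A)).mulVec
              (B.mulVec (volterraTerm A B u x₀ k τ))‖ := norm_smul _ _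
          _ ≤ M * (Real.exp (‖A‖ * (s - τ)) * (‖B‖ *
              ((M * ‖B‖) ^ k * Real.exp (‖A‖ * τ) * τ ^ k / (Nat.factorial k) * ‖x₀‖))) := by
              apply mul_le_mul h1 _ (norm_nonneg _) hM0
              refine le_trans h2 ?_
              apply mul_le_mul_of_nonneg_left _ (Real.exp_pos _).le
              exact mul_le_mul_of_nonneg_left h3 (norm_nonneg _)
          _ = C * τ ^ k := by
              rw [hC, ← he]; ring
      have hInt : IntervalIntegrable (fun τ : ℝ => C * τ ^ k) volume 0 s :=
        (continuous_const.mul (continuous_pow k)).intervalIntegrable 0 s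
      have hmain : ‖volterraTerm A B u x₀ (k + 1) s‖ ≤ |∫ τ in (0:ℝ)..s, C * τ ^ k| := by
        rw [show volterraTerm A B u x₀ (k + 1) s = ∫ τ in (0:ℝ)..s,
            u τ • (NormedSpace.exp ((s - τ) • A)).mulVec
              (B.mulVec (volterraTerm A B u x₀ k τ)) from rfl]
        exact (intervalIntegral.norm_integral_le_of_norm_le hs0
          (ae_of_all _ fun τ hτ => hbound τ (by rwa [Set.uIoc_of_le hs0])) hInt).trans
          (le_abs_self _)
      have hval : (∫ τ in (0:ℝ)..s, C * τ ^ k) = C * (s ^ (k + 1) / (k + 1)) := by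
        rw [intervalIntegral.integral_const_mul, integral_pow]
        norm_num
      refine hmain.trans ?_
      rw [hval, abs_of_nonneg (by positivity), hC]
      have hfact : ((k + 1).factorial : ℝ) = ((k:ℝ) + 1) * (k.factorial : ℝ) := by
        push_cast [Nat.factorial_succ]; ring
      have h1 : ((k:ℝ) + 1) ≠ 0 := by positivity
      have h2 : (k.factorial : ℝ) ≠ 0 := by positivity
      apply le_of_eq
      rw [hfact]
      field_simp
  have hbd := fun k => key k t ⟨ht, le_refl t⟩
  refine ⟨hbd, ?_⟩
  apply Summable.of_nonneg_of_le (fun k => norm_nonneg _)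
    (fun k => (hbd k).trans (le_of_eq ?_))
    ((Real.summable_pow_div_factorial (M * ‖B‖ * t)).mul_right
      (Real.exp (‖A‖ * t) * ‖x₀‖))
  rw [mul_pow (M * ‖B‖) t k]
  ring
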